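/- For all δ ∈ (0,1) and all integers d ≥ 1, there exists a polynomial q in p variables of degree at most 2d such that q(0) = 1, |q(z)| ≤ 1 for all z in the closed unit Euclidean ball B₁, and |q(z)| ≤ 2^{1-δd} for all z ∈ B₁ \ B_δ, where B_δ is the closed ball of radius δ. -/

import Mathlib

open Polynomial Chebyshev Real

lemma T_eval_cosh (d : ℕ) (t : ℝ) :
    (Polynomial.Chebyshev.T ℝ d).eval (Real.cosh t) = Real.cosh (d * t) := by
  induction d using Nat.strong_induction_on with
  | _ d ih =>
    match d with
    | 0 => simp
    | 1 => simp
    | (n+2) =>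
      have h1 := ih (n+1) (by omega) 
      have h2 := ih n (by omega)
      push_cast
      rw [show ((n:ℤ) + 2) = ((n:ℤ)) + 2 by ring, Polynomial.Chebyshev.T_add_two]
      push_cast at h1 h2
      simp only [Polynomial.eval_sub, Polynomial.eval_mul, Polynomial.eval_ofNat,
        Polynomial.eval_X, h1, h2]
      have key : Real.cosh (((n:ℝ)+2) * t) + Real.cosh ((n:ℝ) * t) 
          = 2 * Real.cosh t * Real.cosh (((n:ℝ)+1)*t) := by
        have := Real.cosh_add (((n:ℝ)+1)*t) t
        have := Real.cosh_sub (((n:ℝ)+1)*t) t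
        have e1 : ((n:ℝ)+2) * t = ((n:ℝ)+1)*t + t := by ring
        have e2 : ((n:ℝ)) * t = ((n:ℝ)+1)*t - t := by ring
        rw [e1, e2, Real.cosh_add, Real.cosh_sub]
        ring
      linarith [key]

lemma natDegree_T_le (d : ℕ) : (Polynomial.Chebyshev.T ℝ d).natDegree ≤ d := by
  induction d using Nat.strong_induction_on with
  | _ d ih =>
    match d with
    | 0 => simp
    | 1 => simp [Polynomial.natDegree_X_le]
    | (n+2) =>
      have h1 := ih (n+1) (by omega)
      have h2 := ih n (by omega)
      rw [show ((n+2:ℕ):ℤ) = ((n:ℤ)) + 2 by push_cast; ring, Polynomial.Chebyshev.T_add_two]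
      refine le_trans (Polynomial.natDegree_sub_le _ _) ?_
      rw [max_le_iff]
      constructor
      · refine le_trans (Polynomial.natDegree_mul_le) ?_
        have : (2 * Polynomial.X : ℝ[X]).natDegree ≤ 1 := by
          refine le_trans (Polynomial.natDegree_mul_le) ?_
          simp
        have h1' : (Polynomial.Chebyshev.T ℝ ((n:ℤ)+1)).natDegree ≤ n+1 := by
          rw [show ((n:ℤ)+1) = ((n+1:ℕ):ℤ) by push_cast; ring]; exact h1
        omega
      · omega

lemma abs_T_le_one {x : ℝ} (hx : -1 ≤ x) (hx' : x ≤ 1) (d : ℤ) :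
    |(Polynomial.Chebyshev.T ℝ d).eval x| ≤ 1 := by
  have := Polynomial.Chebyshev.T_real_cos (Real.arccos x) d
  rw [Real.cos_arccos hx hx'] at this
  rw [this]
  exact Real.abs_cos_le_one _

lemma totalDegree_eval₂_le {σ : Type*} (P : ℝ[X]) (L : MvPolynomial σ ℝ) :
    (Polynomial.eval₂ (MvPolynomial.C (σ := σ)) L P).totalDegree ≤ P.natDegree * L.totalDegree := by
  rw [Polynomial.eval₂_eq_sum, Polynomial.sum]
  refine le_trans (MvPolynomial.totalDegree_finset_sum _ _) (Finset.sup_le fun e he => ?_)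
  refine le_trans (MvPolynomial.totalDegree_mul _ _) ?_
  simp only [MvPolynomial.totalDegree_C, zero_add]
  refine le_trans (MvPolynomial.totalDegree_pow _ _) ?_
  exact Nat.mul_le_mul_right _ (Polynomial.le_natDegree_of_mem_supp e he)

-- 2^δ ≤ 1 + δ for δ ∈ [0,1]
lemma two_rpow_le (δ : ℝ) (h0 : 0 ≤ δ) (h1 : δ ≤ 1) : (2:ℝ) ^ δ ≤ 1 + δ := by
  have := convexOn_exp.2 (Set.mem_univ (0:ℝ)) (Set.mem_univ (Real.log 2))
    (by linarith : (0:ℝ) ≤ 1 - δ) h0 (by ring)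
  simp only [smul_eq_mul, mul_zero, zero_add, Real.exp_zero, Real.exp_log two_pos] at this
  rw [Real.rpow_def_of_pos two_pos]
  calc Real.exp (Real.log 2 * δ) = Real.exp (δ * Real.log 2) := by ring_nf
    _ ≤ (1-δ) * 1 + δ * 2 := this
    _ = 1 + δ := by ring

set_option maxHeartbeats 1000000 in
theorem needle_polynomial_exists
    (p : ℕ) (δ : ℝ) (hδ : δ ∈ Set.Ioo (0 : ℝ) 1) (d : ℕ) (hd : 1 ≤ d) :
    ∃ q : MvPolynomial (Fin p) ℝ,
      q.totalDegree ≤ 2 * d ∧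
      MvPolynomial.eval (fun _ => (0 : ℝ)) q = 1 ∧
      (∀ z : EuclideanSpace ℝ (Fin p), ‖z‖ ≤ 1 →
        |MvPolynomial.eval (fun i => z i) q| ≤ 1) ∧
      (∀ z : EuclideanSpace ℝ (Fin p), ‖z‖ ≤ 1 → δ < ‖z‖ →
        |MvPolynomial.eval (fun i => z i) q| ≤ (2 : ℝ) ^ (1 - δ * d)) := by
  obtain ⟨hδ0, hδ1⟩ := hδ
  set m : ℝ := 1 - δ^2 with hm
  have hm0 : 0 < m := by nlinarith
  set u0 : ℝ := (1 + δ^2) / m with hu0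
  set r : ℝ := (1 + δ) / (1 - δ) with hr
  have hr1 : 1 < r := by
    rw [hr, lt_div_iff₀ (by linarith)]; nlinarith
  have hr0 : 0 < r := by linarith
  set t0 : ℝ := Real.log r with ht0
  have ht0' : 0 ≤ t0 := Real.log_nonneg hr1.le
  have hcosh_t0 : Real.cosh t0 = u0 := by
    rw [ht0, Real.cosh_eq, Real.exp_log hr0, Real.exp_neg, Real.exp_log hr0]
    rw [hu0, hr, hm]
    have h1δ : (1:ℝ) - δ ≠ 0 := by linarith
    have h2δ : (1:ℝ) + δ ≠ 0 := by linarith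
    have h3δ : (1:ℝ) - δ^2 ≠ 0 := by nlinarith
    field_simp
    ring
  set c : ℝ := (Polynomial.Chebyshev.T ℝ d).eval u0 with hc
  have hcval : c = Real.cosh (d * t0) := by rw [hc, ← hcosh_t0, T_eval_cosh]
  have hc1 : 1 ≤ c := hcval ▸ Real.one_le_cosh _
  have hc0 : 0 < c := lt_of_lt_of_le one_pos hc1
  -- lower bound on c
  have hclow : (2:ℝ) ^ (δ * d - 1) ≤ c := by
    have h1 : Real.exp (d * t0) = r ^ d := by
      rw [Real.exp_nat_mul, Real.exp_log hr0]
    have h2 : ((2:ℝ) ^ δ) ^ d ≤ r ^ d := by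
      apply pow_le_pow_left₀ (by positivity)
      calc (2:ℝ) ^ δ ≤ 1 + δ := two_rpow_le δ hδ0.le hδ1.le
        _ ≤ r := by rw [hr, le_div_iff₀ (by linarith)]; nlinarith
    have h3 : ((2:ℝ) ^ δ) ^ d = (2:ℝ) ^ (δ * d) := by
      rw [← Real.rpow_natCast ((2:ℝ)^δ) d, ← Real.rpow_mul (by norm_num)]
    have h4 : (2:ℝ) ^ (δ * d - 1) = (2:ℝ) ^ (δ * d) / 2 := by
      rw [Real.rpow_sub two_pos, Real.rpow_one]
    rw [hcval, Real.cosh_eq, h4]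
    have := Real.exp_pos (-(d * t0))
    rw [← h3, ← h1] at *
    nlinarith [Real.exp_pos (-(d*t0)), h2, h3]
  -- the polynomial
  set S : MvPolynomial (Fin p) ℝ := ∑ i, MvPolynomial.X i ^ 2 with hS
  set L : MvPolynomial (Fin p) ℝ := MvPolynomial.C u0 - MvPolynomial.C (2/m) * S with hL
  set q : MvPolynomial (Fin p) ℝ :=
    MvPolynomial.C c⁻¹ * Polynomial.eval₂ MvPolynomial.C L (Polynomial.Chebyshev.T ℝ d) with hq
  -- evaluation formula
  have heval : ∀ f : Fin p → ℝ, MvPolynomial.eval f q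
      = c⁻¹ * (Polynomial.Chebyshev.T ℝ d).eval (MvPolynomial.eval f L) := by
    intro f
    rw [hq, map_mul, MvPolynomial.eval_C]
    congr 1
    rw [Polynomial.hom_eval₂]
    have hcomp : (MvPolynomial.eval f).comp (MvPolynomial.C (σ := Fin p) (R := ℝ))
        = RingHom.id ℝ := by
      ext x; simp
    rw [hcomp]
    rfl
  -- eval L in terms of norm
  have hevalL : ∀ z : EuclideanSpace ℝ (Fin p),
      MvPolynomial.eval (fun i => z i) L = u0 - (2/m) * ‖z‖^2 := by
    intro z
    have hnorm : ‖z‖^2 = ∑ i, (z i)^2 := by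
      rw [EuclideanSpace.norm_eq, Real.sq_sqrt (by positivity)]
      simp [Real.norm_eq_abs, sq_abs]
    rw [hL, map_sub, map_mul, MvPolynomial.eval_C, MvPolynomial.eval_C, hS, hnorm]
    simp
  -- key bound: |T(w)| ≤ c for w ∈ [-1, u0]
  have hTbound : ∀ w : ℝ, -1 ≤ w → w ≤ u0 →
      |(Polynomial.Chebyshev.T ℝ d).eval w| ≤ c := by
    intro w hw1 hw2
    rcases le_or_gt w 1 with hw | hw
    · exact le_trans (abs_T_le_one hw1 hw d) hc1
    · -- w ∈ (1, u0]
      set x : ℝ := w + Real.sqrt (w^2 - 1) with hx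
      have hsq : Real.sqrt (w^2-1) ^ 2 = w^2 - 1 :=
        Real.sq_sqrt (by nlinarith)
      have hx1 : 1 ≤ x := by
        have := Real.sqrt_nonneg (w^2-1); rw [hx]; linarith
      have hx0 : 0 < x := by linarith
      have hinv : x⁻¹ = w - Real.sqrt (w^2-1) := by
        have hmul : x * (w - Real.sqrt (w^2-1)) = 1 := by nlinarith [hsq]
        exact inv_eq_of_mul_eq_one_right hmul
      have hcoshx : Real.cosh (Real.log x) = w := by
        rw [Real.cosh_eq, Real.exp_log hx0, ← Real.log_inv,
          Real.exp_log (by positivity), hinv, hx]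
        ring
      -- x ≤ r
      have h3δ : (1:ℝ) - δ^2 ≠ 0 := by nlinarith
      have hu0sq : u0^2 - 1 = (2*δ/m)^2 := by
        rw [hu0, hm]; field_simp; ring
      have hxr : x ≤ r := by
        have hmono : Real.sqrt (w^2-1) ≤ 2*δ/m := by
          rw [show (2*δ/m) = Real.sqrt ((2*δ/m)^2) from
            (Real.sqrt_sq (by positivity)).symm, ← hu0sq]
          exact Real.sqrt_le_sqrt (by nlinarith)
        have h1δ : (1:ℝ) - δ ≠ 0 := by linarith
        have h2δ : (1:ℝ) + δ ≠ 0 := by linarith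
        have : u0 + 2*δ/m = r := by rw [hu0, hr, hm]; field_simp; ring
        rw [hx]; linarith
      have hlog : Real.log x ≤ t0 := Real.log_le_log hx0 hxr
      have hT : (Polynomial.Chebyshev.T ℝ d).eval w = Real.cosh (d * Real.log x) := by
        rw [← hcoshx, T_eval_cosh]
      rw [hT, abs_of_pos (Real.cosh_pos _), hcval]
      rw [Real.cosh_le_cosh]
      have hlx : 0 ≤ Real.log x := Real.log_nonneg hx1
      rw [abs_of_nonneg (by positivity), abs_of_nonneg (by positivity)]
      exact mul_le_mul_of_nonneg_left hlog (by positivity)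
  refine ⟨q, ?_, ?_, ?_, ?_⟩
  · -- degree
    rw [hq]
    refine le_trans (MvPolynomial.totalDegree_mul _ _) ?_
    rw [MvPolynomial.totalDegree_C, zero_add]
    refine le_trans (totalDegree_eval₂_le _ _) ?_
    have hdT : (Polynomial.Chebyshev.T ℝ d).natDegree ≤ d := natDegree_T_le d
    have hdS : S.totalDegree ≤ 2 := by
      rw [hS]
      refine le_trans (MvPolynomial.totalDegree_finset_sum _ _) (Finset.sup_le fun i _ => ?_)
      refine le_trans (MvPolynomial.totalDegree_pow _ _) ?_
      simp [MvPolynomial.totalDegree_X]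
    have hdL : L.totalDegree ≤ 2 := by
      rw [hL, sub_eq_add_neg, neg_mul_eq_neg_mul, ← MvPolynomial.C_neg]
      refine le_trans (MvPolynomial.totalDegree_add _ _) (max_le (by simp) ?_)
      refine le_trans (MvPolynomial.totalDegree_mul _ _) ?_
      simpa using hdS
    calc (Polynomial.Chebyshev.T ℝ d).natDegree * L.totalDegree ≤ d * 2 :=
          Nat.mul_le_mul hdT hdL
      _ = 2 * d := by ring
  · -- eval at 0
    rw [heval]
    have : MvPolynomial.eval (fun _ => (0:ℝ)) L = u0 := by
      rw [hL, map_sub, map_mul, MvPolynomial.eval_C, MvPolynomial.eval_C, hS]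
      simp
    rw [this, ← hc, inv_mul_cancel₀ (ne_of_gt hc0)]
  · -- bound on ball
    intro z hz
    rw [heval, hevalL, abs_mul, abs_of_pos (by positivity : (0:ℝ) < c⁻¹)]
    have h1 : ‖z‖^2 ≤ 1 := by nlinarith [norm_nonneg z]
    have h2 : 0 ≤ ‖z‖^2 := by positivity
    have hrepr : u0 - 2/m * ‖z‖^2 = (1 + δ^2 - 2*‖z‖^2)/m := by
      rw [hu0]; field_simp
    have hw1 : -1 ≤ u0 - 2/m * ‖z‖^2 := by
      rw [hrepr, le_div_iff₀ hm0, hm]; nlinarith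
    have hw2 : u0 - 2/m * ‖z‖^2 ≤ u0 := by
      have : 0 ≤ 2/m * ‖z‖^2 := by positivity
      linarith
    have := hTbound _ hw1 hw2
    calc c⁻¹ * |(Polynomial.Chebyshev.T ℝ d).eval (u0 - 2/m * ‖z‖^2)| ≤ c⁻¹ * c := by
          apply mul_le_mul_of_nonneg_left this (by positivity)
      _ = 1 := inv_mul_cancel₀ (ne_of_gt hc0)
  · -- bound on annulus
    intro z hz hz'
    rw [heval, hevalL, abs_mul, abs_of_pos (by positivity : (0:ℝ) < c⁻¹)]
    have h1 : ‖z‖^2 ≤ 1 := by nlinarith [norm_nonneg z]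
    have h2 : δ^2 < ‖z‖^2 := by nlinarith
    have hrepr : u0 - 2/m * ‖z‖^2 = (1 + δ^2 - 2*‖z‖^2)/m := by
      rw [hu0]; field_simp
    have hw1 : -1 ≤ u0 - 2/m * ‖z‖^2 := by
      rw [hrepr, le_div_iff₀ hm0, hm]; nlinarith
    have hw2 : u0 - 2/m * ‖z‖^2 ≤ 1 := by
      rw [hrepr, div_le_one hm0, hm]; nlinarith
    have hTle := abs_T_le_one hw1 hw2 (d : ℤ)
    have hfin : c⁻¹ ≤ (2:ℝ) ^ (1 - δ * d) := by
      have : ((2:ℝ) ^ (δ * d - 1))⁻¹ = (2:ℝ) ^ (1 - δ * d) := by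
        rw [← Real.rpow_neg (by norm_num), neg_sub]
      rw [← this]
      exact inv_anti₀ (by positivity) hclow
    calc c⁻¹ * |(Polynomial.Chebyshev.T ℝ d).eval (u0 - 2/m * ‖z‖^2)|
        ≤ c⁻¹ * 1 := mul_le_mul_of_nonneg_left hTle (by positivity)
      _ = c⁻¹ := mul_one _
      _ ≤ (2:ℝ) ^ (1 - δ * d) := hfin
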